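/- Suppose U^s = I for some integer s ≥ 1 and U^t ≠ I for all integers t with 1 ≤ t < s. If s' is a divisor of s such that some complex eigenvalue of U is a primitive s'-th root of unity, then φ(s') ≤ 2·min(n, f), where φ is Euler's totient function. -/

import Mathlib

open Matrix Polynomial

lemma my_eval_charpoly {m : Type*} [DecidableEq m] [Fintype m] {R : Type*} [CommRing R]
    (M : Matrix m m R) (t : R) : (M.charpoly).eval t = (t • (1 : Matrix m m R) - M).det := by
  have h : (M.charpoly).eval t = ((charmatrix M).map (Polynomial.evalRingHom t)).det := by
    rw [Matrix.charpoly]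
    rw [show (charmatrix M).map ⇑(evalRingHom t) = (evalRingHom t).mapMatrix (charmatrix M) from rfl]
    rw [← RingHom.map_det]
    rfl
  rw [h]
  congr 1
  ext i j
  by_cases hij : i = j
  · subst hij
    simp [charmatrix_apply_eq]
  · simp [charmatrix_apply_ne _ _ _ hij, Matrix.one_apply_ne hij]
open Matrix Polynomial

-- map of charmatrix into a ℂ-algebra via a hom from ℂ[X]
lemma my_charmatrix_map {m : Type*} [DecidableEq m] [Fintype m] {R K : Type*} [CommRing R] [CommRing K]
    (φ : R[X] →+* K) (M : Matrix m m R) :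
    (charmatrix M).map φ = (φ X) • (1 : Matrix m m K) - M.map (φ.comp Polynomial.C) := by
  ext i j
  by_cases hij : i = j
  · subst hij
    simp [charmatrix_apply_eq]
  · simp [charmatrix_apply_ne _ _ _ hij, Matrix.one_apply_ne hij]

lemma my_charpoly_rect {a b : ℕ} {F : Type*} [Field F] (A : Matrix (Fin a) (Fin b) F)
    (B : Matrix (Fin b) (Fin a) F) :
    (A * B).charpoly * X ^ b = (B * A).charpoly * X ^ a := by
  set K := FractionRing F[X]
  have hinj : Function.Injective (algebraMap F[X] K) := IsFractionRing.injective _ _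
  apply hinj
  set φ : F[X] →+* K := (algebraMap F[X] K : F[X] →+* K) with hφ
  set ψ : F →+* K := φ.comp Polynomial.C with hψ
  set t : K := φ X with ht
  have ht0 : t ≠ 0 := by
    simp only [ht]
    intro h
    exact Polynomial.X_ne_zero (hinj (by simpa using h))
  have hmapc : ∀ {c d : ℕ} (M : Matrix (Fin c) (Fin d) F), True := fun _ => trivial
  -- key computation
  have key : ∀ {c d : ℕ} (A' : Matrix (Fin c) (Fin d) K) (B' : Matrix (Fin d) (Fin c) K),
      (t • (1 : Matrix (Fin c) (Fin c) K) - A' * B').det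
        = t ^ c * (1 + ((-t⁻¹) • A') * B').det := by
    intro c d A' B'
    have : t • (1 : Matrix (Fin c) (Fin c) K) - A' * B'
        = t • (1 + ((-t⁻¹) • A') * B') := by
      rw [Matrix.smul_mul, smul_add, smul_smul]
      rw [mul_neg, mul_inv_cancel₀ ht0]
      rw [sub_eq_add_neg, neg_one_smul]
    rw [this, Matrix.det_smul, Fintype.card_fin]
  have hchar : ∀ {c : ℕ} (M : Matrix (Fin c) (Fin c) F),
      φ M.charpoly = (t • (1 : Matrix (Fin c) (Fin c) K) - M.map ψ).det := by
    intro c M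
    rw [Matrix.charpoly]
    rw [show φ (charmatrix M).det = (φ.mapMatrix (charmatrix M)).det from (RingHom.map_det φ _)]
    rw [show φ.mapMatrix (charmatrix M) = (charmatrix M).map φ from rfl]
    rw [my_charmatrix_map]
  have hABmap : (A * B).map ψ = A.map ψ * B.map ψ := Matrix.map_mul
  have hBAmap : (B * A).map ψ = B.map ψ * A.map ψ := Matrix.map_mul
  rw [_root_.map_mul, _root_.map_mul, map_pow, map_pow, hchar, hchar, hABmap, hBAmap, key, key,
    Matrix.det_one_add_mul_comm]
  rw [show B.map ψ * (-t⁻¹ • A.map ψ) = (-t⁻¹ • B.map ψ) * A.map ψ by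
    rw [Matrix.mul_smul, Matrix.smul_mul]]
  ring

theorem stmt_13 (k n f : ℕ) (hk : 0 < k) (hn : 0 < n) (hf : 0 < f)
    (V : Matrix (Fin k) (Fin n) ℝ) (W : Matrix (Fin k) (Fin f) ℝ)
    (hV : Vᵀ * V = 1) (hW : Wᵀ * W = 1)
    (U : Matrix (Fin k) (Fin k) ℝ)
    (hU : U = (2 • (W * Wᵀ) - 1) * (2 • (V * Vᵀ) - 1))
    (hrat : ∀ i j : Fin n, ∃ q : ℚ, (Vᵀ * W * Wᵀ * V) i j = (q : ℝ))
    (s : ℕ) (hs : 1 ≤ s) (hUs : U ^ s = 1)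
    (hmin : ∀ t : ℕ, 1 ≤ t → t < s → U ^ t ≠ 1)
    (s' : ℕ) (hdvd : s' ∣ s)
    (hroot : ∃ ξ : ℂ, (∃ x : Fin k → ℂ, x ≠ 0 ∧
        (U.map (Complex.ofReal)) *ᵥ x = ξ • x) ∧ IsPrimitiveRoot ξ s') :
    Nat.totient s' ≤ 2 * min n f := by
  have hs'pos : 0 < s' := Nat.pos_of_dvd_of_pos hdvd hs
  have hminnf : 1 ≤ min n f := le_min hn hf
  by_cases hsmall : s' ≤ 2
  · have h1 : s'.totient ≤ 1 := by interval_cases s' <;> decide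
    omega
  push_neg at hsmall
  obtain ⟨ξ, ⟨x, hx0, hxe⟩, hprim⟩ := hroot
  have hξpow : ξ ^ s' = 1 := hprim.pow_eq_one
  have hξ0 : ξ ≠ 0 := by
    intro h
    rw [h, zero_pow hs'pos.ne'] at hξpow
    exact zero_ne_one hξpow
  have hξsq : ξ ^ 2 ≠ 1 := by
    intro h
    have := Nat.le_of_dvd (by norm_num) (hprim.dvd_of_pow_eq_one 2 h)
    omega
  have hξm1 : (1 : ℂ) + ξ ≠ 0 := by
    intro h
    apply hξsq
    have hξval : ξ = -1 := by linear_combination h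
    rw [hξval]; ring
  -- complexified matrices
  set ι : ℝ →+* ℂ := Complex.ofRealHom with hι
  have hιcoe : (Complex.ofReal : ℝ → ℂ) = ⇑ι := rfl
  set Vc := V.map ι with hVcdef
  set Wc := W.map ι with hWcdef
  have hVc : Vcᵀ * Vc = 1 := by
    rw [hVcdef, ← Matrix.transpose_map, ← Matrix.map_mul, hV]
    exact Matrix.map_one _ (map_zero ι) (map_one ι)
  have hWc : Wcᵀ * Wc = 1 := by
    rw [hWcdef, ← Matrix.transpose_map, ← Matrix.map_mul, hW]
    exact Matrix.map_one _ (map_zero ι) (map_one ι)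
  set Qc := Wc * Wcᵀ with hQdef
  set Pc := Vc * Vcᵀ with hPdef
  have hQQ : Qc * Qc = Qc := by
    rw [hQdef, Matrix.mul_assoc, ← Matrix.mul_assoc Wcᵀ, hWc, Matrix.one_mul]
  set Ac := Qc + Qc - 1 with hAdef
  set Bc := Pc + Pc - 1 with hBdef
  have hUc : U.map Complex.ofReal = Ac * Bc := by
    have hU' : U = ((W * Wᵀ + W * Wᵀ) - 1) * ((V * Vᵀ + V * Vᵀ) - 1) := by
      rw [hU, two_nsmul, two_nsmul]
    rw [hU', hιcoe]
    have hmm : ∀ M : Matrix (Fin k) (Fin k) ℝ, M.map ⇑ι = ι.mapMatrix M := fun _ => rfl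
    rw [hmm]
    rw [_root_.map_mul, _root_.map_sub, _root_.map_sub, _root_.map_one, _root_.map_add, _root_.map_add]
    have hWWmap : ι.mapMatrix (W * Wᵀ) = Qc := by
      rw [RingHom.mapMatrix_apply, Matrix.map_mul, Matrix.transpose_map, hQdef, hWcdef]
    have hVVmap : ι.mapMatrix (V * Vᵀ) = Pc := by
      rw [RingHom.mapMatrix_apply, Matrix.map_mul, Matrix.transpose_map, hPdef, hVcdef]
    rw [hWWmap, hVVmap]
  have hAA : Ac * Ac = 1 := by
    have expand : Ac * Ac = (Qc * Qc + Qc * Qc + Qc * Qc + Qc * Qc)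
        - (Qc + Qc + Qc + Qc) + 1 := by
      rw [hAdef]; noncomm_ring
    rw [expand, hQQ]; abel
  have hxe' : (Ac * Bc) *ᵥ x = ξ • x := by rw [← hUc]; exact hxe
  have hB : Bc *ᵥ x = ξ • (Ac *ᵥ x) := by
    have h1 : Ac *ᵥ ((Ac * Bc) *ᵥ x) = Ac *ᵥ (ξ • x) := by rw [hxe']
    rwa [Matrix.mulVec_mulVec, ← Matrix.mul_assoc, hAA, Matrix.one_mul,
      Matrix.mulVec_smul] at h1
  set u := Vcᵀ *ᵥ x with hudef
  set q := Qc *ᵥ x with hqdef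
  set p := Pc *ᵥ x with hpdef
  set y := Vcᵀ *ᵥ q with hydef
  set r := Qc *ᵥ p with hrdef
  have hAx : Ac *ᵥ x = q + q - x := by
    rw [hAdef, Matrix.sub_mulVec, Matrix.add_mulVec, Matrix.one_mulVec, hqdef]
  have hBx : Bc *ᵥ x = p + p - x := by
    rw [hBdef, Matrix.sub_mulVec, Matrix.add_mulVec, Matrix.one_mulVec, hpdef]
  have hstar : p + p - x = ξ • (q + q - x) := by rw [← hAx, ← hBx]; exact hB
  have hVP : Vcᵀ * Pc = Vcᵀ := by
    rw [hPdef, ← Matrix.mul_assoc, hVc, Matrix.one_mul]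
  have hVp : Vcᵀ *ᵥ p = u := by
    rw [hpdef, Matrix.mulVec_mulVec, hVP, hudef]
  have hQq : Qc *ᵥ q = q := by
    rw [hqdef, Matrix.mulVec_mulVec, hQQ]
  -- u ≠ 0
  have hu0 : u ≠ 0 := by
    intro hu
    have hp0 : p = 0 := by
      rw [hpdef, hPdef, ← Matrix.mulVec_mulVec, ← hudef, hu, Matrix.mulVec_zero]
    have hneg : -x = ξ • (Ac *ᵥ x) := by
      have hst := hstar
      rw [hp0, hAx] at *
      rw [hp0] at hst
      rw [hAx, ← hst]; abel
    have h2' : -(Ac *ᵥ x) = ξ • x := by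
      have hcongr : Ac *ᵥ (-x) = Ac *ᵥ (ξ • (Ac *ᵥ x)) := by rw [hneg]
      rw [Matrix.mulVec_smul, Matrix.mulVec_mulVec, hAA, Matrix.one_mulVec,
        Matrix.mulVec_neg] at hcongr
      exact hcongr
    have hAx2 : Ac *ᵥ x = -(ξ • x) := neg_eq_iff_eq_neg.mp h2'
    have hxx : x = (ξ * ξ) • x := by
      have : -x = ξ • (-(ξ • x)) := by rw [← hAx2]; exact hneg
      rw [smul_neg, smul_smul] at this
      have := neg_injective this
      exact this
    obtain ⟨i, hi⟩ := Function.ne_iff.mp hx0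
    have hxi : x i = (ξ * ξ) * x i := congrFun hxx i
    apply hξsq
    have hz : (ξ * ξ - 1) * x i = 0 := by linear_combination -hxi
    rcases mul_eq_zero.mp hz with h | h
    · rw [pow_two]; linear_combination h
    · exact absurd h hi
  -- eigen relation for Mc
  have hVstar : u + u - u = ξ • (y + y - u) := by
    have h := congrArg (fun v => Vcᵀ *ᵥ v) hstar
    simpa only [Matrix.mulVec_add, Matrix.mulVec_sub, Matrix.mulVec_smul, hVp,
      ← hudef, ← hydef] using h
  have h1 : u + ξ • u = ξ • y + ξ • y := by
    have h := hVstar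
    rw [smul_sub, smul_add] at h
    calc u + ξ • u = (u + u - u) + ξ • u := by abel
      _ = (ξ • y + ξ • y - ξ • u) + ξ • u := by rw [h]
      _ = ξ • y + ξ • y := by abel
  have hQstar : r + r - q = ξ • (q + q - q) := by
    have h := congrArg (fun v => Qc *ᵥ v) hstar
    simpa only [Matrix.mulVec_add, Matrix.mulVec_sub, Matrix.mulVec_smul, hQq,
      ← hqdef, ← hrdef] using h
  have h2 : r + r = q + ξ • q := by
    have h := hQstar
    have hq' : ξ • (q + q - q) = ξ • q := by congr 1; abel
    rw [hq'] at h
    calc r + r = (r + r - q) + q := by abel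
      _ = ξ • q + q := by rw [h]
      _ = q + ξ • q := by abel
  set Xc := Vcᵀ * Wc with hXdef
  set Mc := Xc * Xcᵀ with hMdef
  have hMcVt : Mc * Vcᵀ = Vcᵀ * Qc * Pc := by
    rw [hMdef, hXdef, Matrix.transpose_mul, Matrix.transpose_transpose, hQdef, hPdef]
    simp only [Matrix.mul_assoc]
  have hMu : Mc *ᵥ u = Vcᵀ *ᵥ r := by
    rw [hudef, Matrix.mulVec_mulVec, hMcVt, hrdef, hpdef]
    simp only [Matrix.mulVec_mulVec, Matrix.mul_assoc]
  have h2v : Mc *ᵥ u + Mc *ᵥ u = y + ξ • y := by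
    have h := congrArg (fun v => Vcᵀ *ᵥ v) h2
    simp only [Matrix.mulVec_add, Matrix.mulVec_smul] at h
    rw [hMu]
    rw [show Vcᵀ *ᵥ q = y from hydef.symm] at h
    exact h
  set lam : ℂ := (1 + ξ) ^ 2 / (4 * ξ) with hlamdef
  have h4ξ : (4 * ξ : ℂ) ≠ 0 := mul_ne_zero (by norm_num) hξ0
  have hlamne : ((1 + ξ) ^ 2 : ℂ) ≠ 0 := pow_ne_zero _ hξm1
  have hlam0 : lam ≠ 0 := div_ne_zero hlamne h4ξ
  have e1 : (2 * ξ) • y = (1 + ξ) • u := by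
    calc (2 * ξ) • y = ξ • y + ξ • y := by module
      _ = u + ξ • u := h1.symm
      _ = (1 + ξ) • u := by module
  have e2 : (2 : ℂ) • (Mc *ᵥ u) = y + ξ • y := by
    calc (2 : ℂ) • (Mc *ᵥ u) = Mc *ᵥ u + Mc *ᵥ u := by module
      _ = y + ξ • y := h2v
  have key : (4 * ξ) • (Mc *ᵥ u) = ((1 + ξ) ^ 2) • u := by
    calc (4 * ξ) • (Mc *ᵥ u) = (2 * ξ) • ((2 : ℂ) • (Mc *ᵥ u)) := by module
      _ = (2 * ξ) • (y + ξ • y) := by rw [e2]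
      _ = (1 + ξ) • ((2 * ξ) • y) := by module
      _ = (1 + ξ) • ((1 + ξ) • u) := by rw [e1]
      _ = ((1 + ξ) ^ 2) • u := by module
  have hMcu : Mc *ᵥ u = lam • u := by
    have hh : Mc *ᵥ u = (4 * ξ)⁻¹ • ((4 * ξ) • (Mc *ᵥ u)) := by
      rw [smul_smul, inv_mul_cancel₀ h4ξ, one_smul]
    rw [hh, key, smul_smul, hlamdef, div_eq_inv_mul]
  -- rationality
  set Mq : Matrix (Fin n) (Fin n) ℚ := fun i j => Classical.choose (hrat i j) with hMqdef
  have hMcmap : Mc = Mq.map (algebraMap ℚ ℂ) := by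
    have hMreal : Mc = (Vᵀ * W * Wᵀ * V).map Complex.ofReal := by
      rw [hMdef, hXdef, Matrix.transpose_mul, Matrix.transpose_transpose, hιcoe]
      rw [Matrix.map_mul, Matrix.map_mul, Matrix.map_mul, Matrix.transpose_map,
        Matrix.transpose_map, ← hVcdef, ← hWcdef]
      simp only [Matrix.mul_assoc]
    ext i j
    rw [hMreal]
    have hspec := Classical.choose_spec (hrat i j)
    rw [Matrix.map_apply, Matrix.map_apply, hspec]
    rw [show Mq i j = Classical.choose (hrat i j) from rfl]
    rw [eq_ratCast (algebraMap ℚ ℂ)]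
    push_cast
    ring
  set pQ := Mq.charpoly with hpQdef
  have hcharMc : Mc.charpoly = pQ.map (algebraMap ℚ ℂ) := by
    rw [hMcmap, hpQdef, Matrix.charpoly_map]
  have hdet0 : (lam • (1 : Matrix (Fin n) (Fin n) ℂ) - Mc).det = 0 := by
    rw [← Matrix.exists_mulVec_eq_zero_iff]
    refine ⟨u, hu0, ?_⟩
    rw [Matrix.sub_mulVec, Matrix.smul_mulVec, Matrix.one_mulVec, hMcu, sub_self]
  have hevalM : (Mc.charpoly).eval lam = 0 := by rw [my_eval_charpoly]; exact hdet0
  have haev : Polynomial.aeval lam pQ = 0 := by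
    rw [Polynomial.aeval_def, ← Polynomial.eval_map, ← hcharMc]; exact hevalM
  have hintlam : IsIntegral ℚ lam :=
    ⟨pQ, Mq.charpoly_monic, by rw [← Polynomial.aeval_def]; exact haev⟩
  set mq := minpoly ℚ lam with hmqdef
  set d := mq.natDegree with hddef
  have hmqdvd : mq ∣ pQ := minpoly.dvd ℚ lam haev
  have hdn : d ≤ n := by
    have h := Polynomial.natDegree_le_of_dvd hmqdvd (Mq.charpoly_monic).ne_zero
    rwa [hpQdef, Matrix.charpoly_natDegree_eq_dim, Fintype.card_fin] at h
  -- f side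
  set Nc := Xcᵀ * Xc with hNdef
  set w := Xcᵀ *ᵥ u with hwdef
  have hNw : Nc *ᵥ w = lam • w := by
    rw [hwdef]
    calc Nc *ᵥ (Xcᵀ *ᵥ u) = (Nc * Xcᵀ) *ᵥ u := Matrix.mulVec_mulVec _ _ _
      _ = (Xcᵀ * Mc) *ᵥ u := by rw [hNdef, hMdef, Matrix.mul_assoc]
      _ = Xcᵀ *ᵥ (Mc *ᵥ u) := (Matrix.mulVec_mulVec _ _ _).symm
      _ = Xcᵀ *ᵥ (lam • u) := by rw [hMcu]
      _ = lam • (Xcᵀ *ᵥ u) := Matrix.mulVec_smul _ _ _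
  have hw0 : w ≠ 0 := by
    intro hw
    have hMu0 : Mc *ᵥ u = 0 := by
      rw [hMdef, ← Matrix.mulVec_mulVec, ← hwdef, hw, Matrix.mulVec_zero]
    rw [hMcu] at hMu0
    rcases smul_eq_zero.mp hMu0 with h | h
    exacts [hlam0 h, hu0 h]
  have hdetN : (lam • (1 : Matrix (Fin f) (Fin f) ℂ) - Nc).det = 0 := by
    rw [← Matrix.exists_mulVec_eq_zero_iff]
    refine ⟨w, hw0, ?_⟩
    rw [Matrix.sub_mulVec, Matrix.smul_mulVec, Matrix.one_mulVec, hNw, sub_self]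
  have hevalN : (Nc.charpoly).eval lam = 0 := by rw [my_eval_charpoly]; exact hdetN
  have hrect : Mc.charpoly * Polynomial.X ^ f = Nc.charpoly * Polynomial.X ^ n :=
    my_charpoly_rect Xc Xcᵀ
  set mqc := mq.map (algebraMap ℚ ℂ) with hmqcdef
  have hdvd1 : mqc ∣ Mc.charpoly := by
    rw [hcharMc, hmqcdef]
    exact Polynomial.map_dvd _ hmqdvd
  have hdvd2 : mqc ∣ Nc.charpoly * Polynomial.X ^ n := by
    rw [← hrect]
    exact hdvd1.trans (dvd_mul_right _ _)
  have hXndvd : ¬ (Polynomial.X : ℚ[X]) ∣ mq := by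
    rw [Polynomial.X_dvd_iff]
    exact minpoly.coeff_zero_ne_zero hintlam hlam0
  have hcop : IsCoprime ((Polynomial.X : ℚ[X]) ^ n) mq :=
    IsCoprime.pow_left ((Polynomial.irreducible_X).coprime_iff_not_dvd.mpr hXndvd)
  have hcopc : IsCoprime ((Polynomial.X : ℂ[X]) ^ n) mqc := by
    have h := hcop.map (Polynomial.mapRingHom (algebraMap ℚ ℂ))
    simpa using h
  have hdvdN : mqc ∣ Nc.charpoly := (hcopc.symm).dvd_of_dvd_mul_right hdvd2
  have hdf : d ≤ f := by
    have h := Polynomial.natDegree_le_of_dvd hdvdN (Nc.charpoly_monic).ne_zero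
    rw [Matrix.charpoly_natDegree_eq_dim, Fintype.card_fin] at h
    rwa [hmqcdef, Polynomial.natDegree_map] at h
  -- the quadratic substitution polynomial
  have hmono : mq.Monic := minpoly.monic hintlam
  set Fq : ℚ[X] := ∑ i ∈ Finset.range (d + 1),
      Polynomial.C (mq.coeff i) * (1 + Polynomial.X) ^ (2 * i) *
        (Polynomial.C 4 * Polynomial.X) ^ (d - i) with hFqdef
  have hFaev : Polynomial.aeval ξ Fq = 0 := by
    have hterm : Polynomial.aeval ξ Fq
        = ∑ i ∈ Finset.range (d + 1), (mq.coeff i : ℂ) * (1 + ξ) ^ (2 * i) * (4 * ξ) ^ (d - i) := by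
      rw [hFqdef, map_sum]
      refine Finset.sum_congr rfl fun i _ => ?_
      simp [eq_ratCast]
    rw [hterm]
    have hsum : ∀ i ∈ Finset.range (d + 1),
        (mq.coeff i : ℂ) * (1 + ξ) ^ (2 * i) * (4 * ξ) ^ (d - i)
          = (4 * ξ) ^ d * ((mq.coeff i : ℂ) * lam ^ i) := by
      intro i hi
      have hid : i ≤ d := Nat.lt_succ_iff.mp (Finset.mem_range.mp hi)
      have hpowsplit : (4 * ξ : ℂ) ^ d = (4 * ξ) ^ i * (4 * ξ) ^ (d - i) := by
        rw [← pow_add, Nat.add_sub_cancel' hid]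
      rw [hpowsplit, hlamdef, div_pow, ← pow_mul]
      have h4i : ((4 * ξ : ℂ)) ^ i ≠ 0 := pow_ne_zero _ h4ξ
      field_simp
    rw [Finset.sum_congr rfl hsum, ← Finset.mul_sum]
    have hq : ∑ i ∈ Finset.range (d + 1), (mq.coeff i : ℂ) * lam ^ i
        = Polynomial.aeval lam mq := by
      rw [Polynomial.aeval_eq_sum_range]
      refine Finset.sum_congr rfl fun i _ => ?_
      rw [Algebra.smul_def, eq_ratCast]
    rw [hq, minpoly.aeval, mul_zero]
  have hF0 : Fq ≠ 0 := by
    intro h0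
    have heval : Fq.eval 0 = 1 := by
      rw [hFqdef, Polynomial.eval_finset_sum]
      rw [Finset.sum_eq_single d]
      · have : mq.coeff d = 1 := hmono.coeff_natDegree
        simp [this]
      · intro i hi hne
        have hid : i ≤ d := Nat.lt_succ_iff.mp (Finset.mem_range.mp hi)
        have hdi : d - i ≠ 0 := by omega
        simp [zero_pow hdi]
      · intro hd
        exact absurd (Finset.self_mem_range_succ d) hd
    rw [h0] at heval
    simp at heval
  have hdegF : Fq.natDegree ≤ 2 * d := by
    rw [hFqdef]
    refine Polynomial.natDegree_sum_le_of_forall_le _ _ fun i hi => ?_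
    have hid : i ≤ d := Nat.lt_succ_iff.mp (Finset.mem_range.mp hi)
    have t1 : ((1 : ℚ[X]) + Polynomial.X).natDegree ≤ 1 := by
      refine le_trans (Polynomial.natDegree_add_le _ _) ?_
      simp
    have t2 : ((Polynomial.C (4 : ℚ)) * Polynomial.X).natDegree ≤ 1 := by
      refine le_trans (Polynomial.natDegree_mul_le) ?_
      simp
    have hb : ∀ (a : ℚ) (i2 j2 : ℕ),
        (Polynomial.C a * (1 + Polynomial.X) ^ i2 *
          (Polynomial.C (4 : ℚ) * Polynomial.X) ^ j2).natDegree ≤ i2 + j2 := by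
      intro a i2 j2
      have s1 := Polynomial.natDegree_mul_le
        (p := Polynomial.C a * (1 + Polynomial.X) ^ i2)
        (q := (Polynomial.C (4 : ℚ) * Polynomial.X) ^ j2)
      have s2 := Polynomial.natDegree_mul_le (p := Polynomial.C a)
        (q := ((1 : ℚ[X]) + Polynomial.X) ^ i2)
      have b1 : (Polynomial.C a).natDegree = 0 := Polynomial.natDegree_C _
      have b2 : (((1 : ℚ[X]) + Polynomial.X) ^ i2).natDegree ≤ i2 * 1 :=
        le_trans Polynomial.natDegree_pow_le (Nat.mul_le_mul_left _ t1)
      have b3 : ((Polynomial.C (4 : ℚ) * Polynomial.X) ^ j2).natDegree ≤ j2 * 1 :=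
        le_trans Polynomial.natDegree_pow_le (Nat.mul_le_mul_left _ t2)
      omega
    exact le_trans (hb _ _ _) (by omega)

  have hxint : IsIntegral ℚ ξ := by
    refine ⟨Polynomial.X ^ s' - Polynomial.C 1, Polynomial.monic_X_pow_sub_C 1 hs'pos.ne', ?_⟩
    simp [hξpow]
  have hmindvd : minpoly ℚ ξ ∣ Fq := minpoly.dvd ℚ ξ hFaev
  have htot : (minpoly ℚ ξ).natDegree = s'.totient := by
    rw [← Polynomial.cyclotomic_eq_minpoly_rat hprim hs'pos, Polynomial.natDegree_cyclotomic]
  have hfinal : (minpoly ℚ ξ).natDegree ≤ 2 * d :=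
    le_trans (Polynomial.natDegree_le_of_dvd hmindvd hF0) hdegF
  rw [htot] at hfinal
  have hdm : d ≤ min n f := le_min hdn hdf
  omega
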